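/- In the free group F on two generators x and y, the submonoid generated by the three elements x, y, and y·x⁻¹·y·x is free of rank 3 on these generators; i.e., the canonical monoid homomorphism from the free monoid on a three-element alphabet sending the letters to x, y, y·x⁻¹·y·x respectively is injective. -/

import Mathlib

namespace Stmt1Aux

/-- The reduced words of the three generators. -/
def σ : Fin 3 → List (Fin 2 × Bool)
  | 0 => [(0, true)]
  | 1 => [(1, true)]
  | 2 => [(1, true), (0, false), (1, true), (0, true)]

/-- The relation of being a reduced (no-cancellation) adjacent pair. -/
def R (a b : Fin 2 × Bool) : Prop := ¬(a.1 = b.1 ∧ a.2 = !b.2)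

lemma chain_sigma (i : Fin 3) : List.Chain' R (σ i) := by
  fin_cases i <;> simp [σ, R, List.Chain', List.isChain_cons_cons, List.isChain_singleton]

lemma getLast_sigma (i : Fin 3) : ∀ p ∈ (σ i).getLast?, p.2 = true := by
  fin_cases i <;> simp [σ]

lemma head_snd_true : ∀ (l : List (Fin 3)) (p : Fin 2 × Bool),
    ((l.map σ).flatten).head? = some p → p.2 = true := by
  rintro (_ | ⟨i, t⟩) p h
  · simp at h
  · rw [List.map_cons, List.flatten_cons] at h
    fin_cases i <;> simp [σ] at h <;> simp [← h]

lemma chain_flatten (l : List (Fin 3)) : List.Chain' R ((l.map σ).flatten) := by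
  induction l with
  | nil => simp [List.Chain']
  | cons i t ih =>
    rw [List.map_cons, List.flatten_cons, List.Chain', List.isChain_append]
    refine ⟨chain_sigma i, ih, ?_⟩
    intro x hx y hy
    have hx2 := getLast_sigma i x hx
    have hy2 := head_snd_true t y hy
    simp [R, hx2, hy2]

lemma reduce_of_chain : ∀ L : List (Fin 2 × Bool),
    List.Chain' R L → FreeGroup.reduce L = L := by
  intro L h
  induction L with
  | nil => rfl
  | cons x t ih =>
    rw [FreeGroup.reduce.cons, ih h.tail]
    rcases t with _ | ⟨y, t'⟩
    · rfl
    · have hR : R x y := (List.isChain_cons_cons.mp h).1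
      simp only [List.casesOn]
      rw [if_neg]
      exact fun hc => hR ⟨hc.1, hc.2⟩

lemma code_inj : ∀ l1 l2 : List (Fin 3),
    (l1.map σ).flatten = (l2.map σ).flatten → l1 = l2 := by
  intro l1
  induction l1 with
  | nil =>
    rintro (_ | ⟨j, t⟩) h
    · rfl
    · exfalso
      rw [List.map_cons, List.flatten_cons] at h
      fin_cases j <;> simp [σ] at h
  | cons i t ih =>
    rintro (_ | ⟨j, t2⟩) h
    · exfalso
      rw [List.map_cons, List.flatten_cons] at h
      fin_cases i <;> simp [σ] at h
    · rw [List.map_cons, List.flatten_cons, List.map_cons, List.flatten_cons] at h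
      fin_cases i <;> fin_cases j <;> simp only [σ] at h <;>
        simp only [List.cons_append, List.nil_append, List.cons.injEq, Prod.mk.injEq] at h
      -- 9 cases
      · rw [ih t2 h.2]
      · exact absurd h.1.1 (by decide)
      · exact absurd h.1.1 (by decide)
      · exact absurd h.1.1 (by decide)
      · rw [ih t2 h.2]
      · exfalso
        have := head_snd_true t (0, false) (by rw [h.2]; rfl)
        simp at this
      · exact absurd h.1.1 (by decide)
      · exfalso
        have := head_snd_true t2 (0, false) (by rw [← h.2]; rfl)
        simp at this
      · rw [ih t2 h.2.2.2.2]

end Stmt1Aux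

/-- In the free group on two generators `x = of 0`, `y = of 1`, the submonoid
generated by `x`, `y`, and `y * x⁻¹ * y * x` is free of rank 3 on these generators: the
canonical monoid homomorphism from the free monoid on three letters is injective. -/
theorem stmt1 :
    Function.Injective
      ⇑(FreeMonoid.lift (![FreeGroup.of 0, FreeGroup.of 1,
          FreeGroup.of 1 * (FreeGroup.of 0)⁻¹ * FreeGroup.of 1 * FreeGroup.of 0] :
        Fin 3 → FreeGroup (Fin 2))) := by
  set f : Fin 3 → FreeGroup (Fin 2) :=
    ![FreeGroup.of 0, FreeGroup.of 1,
      FreeGroup.of 1 * (FreeGroup.of 0)⁻¹ * FreeGroup.of 1 * FreeGroup.of 0] with hf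
  have hfi : ∀ i, f i = FreeGroup.mk (Stmt1Aux.σ i) := by
    intro i
    fin_cases i
    · show FreeGroup.of 0 = _; rfl
    · show FreeGroup.of 1 = _; rfl
    · show FreeGroup.of 1 * (FreeGroup.of 0)⁻¹ * FreeGroup.of 1 * FreeGroup.of 0 = _
      show FreeGroup.mk _ * (FreeGroup.mk _)⁻¹ * FreeGroup.mk _ * FreeGroup.mk _ = _
      rw [FreeGroup.inv_mk, FreeGroup.mul_mk, FreeGroup.mul_mk, FreeGroup.mul_mk]
      rfl
  have key : ∀ w : FreeMonoid (Fin 3),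
      FreeMonoid.lift f w = FreeGroup.mk ((w.toList.map Stmt1Aux.σ).flatten) := by
    intro w
    induction w using FreeMonoid.inductionOn' with
    | one => rfl
    | of_mul i w ih =>
      rw [map_mul, FreeMonoid.lift_eval_of, ih, hfi, FreeGroup.mul_mk]
      rfl
  intro a b hab
  rw [key, key] at hab
  have h2 := FreeGroup.reduce.sound hab
  rw [Stmt1Aux.reduce_of_chain _ (Stmt1Aux.chain_flatten _),
    Stmt1Aux.reduce_of_chain _ (Stmt1Aux.chain_flatten _)] at h2
  exact FreeMonoid.toList.injective (Stmt1Aux.code_inj _ _ h2)
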